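/- Let 0 < α < β < 1 and let v : [0,1] → ℝ be defined by v(ρ) := −ρ³/3 + ((α+β)/2)ρ² − αβρ + γ with γ := 1/3 − (α+β)/2 + αβ, so that v′(ρ) = −(ρ − α)(ρ − β) and v(1) = 0. Then: (i) v(α) = (1/6)(α − 1)²(α − 3β + 2); (ii) v(ρ) ≥ 0 for all ρ ∈ [0,1] if and only if α ≥ 3β − 2, and v(ρ) > 0 for all ρ ∈ [0,1) if and only if α > 3β − 2; (iii) if α > 3β − 2, then with f(ρ) := ρv(ρ) one has (f(β) − f(α))/(β − α) > 0. -/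

import Mathlib

open Set

/-- Lemma 3.4: properties of the cubic velocity with `v'(ρ) = -(ρ-α)(ρ-β)`
and `v(1) = 0`. -/
theorem stmt19 (α β γ : ℝ) (h0 : 0 < α) (hαβ : α < β) (hβ : β < 1)
    (hγ : γ = 1 / 3 - (α + β) / 2 + α * β)
    (v : ℝ → ℝ)
    (hv : ∀ ρ, v ρ = -ρ ^ 3 / 3 + (α + β) / 2 * ρ ^ 2 - α * β * ρ + γ) :
    (∀ ρ, deriv v ρ = -((ρ - α) * (ρ - β))) ∧ v 1 = 0 ∧
    -- (i)
    v α = 1 / 6 * (α - 1) ^ 2 * (α - 3 * β + 2) ∧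
    -- (ii)
    ((∀ ρ ∈ Icc (0:ℝ) 1, 0 ≤ v ρ) ↔ 3 * β - 2 ≤ α) ∧
    ((∀ ρ ∈ Ico (0:ℝ) 1, 0 < v ρ) ↔ 3 * β - 2 < α) ∧
    -- (iii)
    (3 * β - 2 < α → 0 < (β * v β - α * v α) / (β - α)) := by
  have hvf : v = fun ρ => -ρ ^ 3 / 3 + (α + β) / 2 * ρ ^ 2 - α * β * ρ + γ :=
    funext hv
  have hα1 : α < 1 := hαβ.trans hβ
  have hβ0 : 0 < β := h0.trans hαβ
  -- key SOS identity
  have key : ∀ ρ : ℝ, 48 * v ρ =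
      (1 - ρ) * ((4 * (1 - ρ) - 3 * (2 - α - β)) ^ 2
        + 3 * ((β - 3 * α + 2) * (α - 3 * β + 2))) := by
    intro ρ; rw [hv, hγ]; ring
  have hb3a : 0 < β - 3 * α + 2 := by linarith
  refine ⟨?_, ?_, ?_, ?_, ?_, ?_⟩
  · intro ρ
    have hd : HasDerivAt (fun ρ : ℝ => -ρ ^ 3 / 3 + (α + β) / 2 * ρ ^ 2
        - α * β * ρ + γ) (-((ρ - α) * (ρ - β))) ρ := by
      have h1 := (((hasDerivAt_pow 3 ρ).neg.div_const 3).add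
        ((hasDerivAt_pow 2 ρ).const_mul ((α + β) / 2))).sub
        ((hasDerivAt_id ρ).const_mul (α * β))
      have h2 := h1.add_const γ
      refine h2.congr_deriv ?_
      push_cast
      ring
    rw [hvf]
    exact hd.deriv
  · rw [hv, hγ]; ring
  · rw [hv, hγ]; ring
  · constructor
    · intro h
      have hA := h α ⟨h0.le, hα1.le⟩
      have hvα : v α = 1 / 6 * (α - 1) ^ 2 * (α - 3 * β + 2) := by
        rw [hv, hγ]; ring
      rw [hvα] at hA
      by_contra h'
      push_neg at h'
      nlinarith [mul_pos (mul_pos (show (0:ℝ) < 1 - α by linarith)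
        (show (0:ℝ) < 1 - α by linarith)) (show (0:ℝ) < 3 * β - 2 - α by linarith)]
    · intro h ρ ⟨hρ0, hρ1⟩
      have h1 : (0:ℝ) ≤ 1 - ρ := by linarith
      nlinarith [key ρ, mul_nonneg h1 (sq_nonneg (4 * (1 - ρ) - 3 * (2 - α - β))),
        mul_nonneg (mul_nonneg h1 hb3a.le) (by linarith : (0:ℝ) ≤ α - 3 * β + 2)]
  · constructor
    · intro h
      have hA := h α ⟨h0.le, hα1⟩
      have hvα : v α = 1 / 6 * (α - 1) ^ 2 * (α - 3 * β + 2) := by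
        rw [hv, hγ]; ring
      rw [hvα] at hA
      by_contra h'
      push_neg at h'
      nlinarith [mul_nonneg (sq_nonneg (α - 1)) (show (0:ℝ) ≤ 3 * β - 2 - α by linarith)]
    · intro h ρ ⟨hρ0, hρ1⟩
      have h1 : (0:ℝ) < 1 - ρ := by linarith
      nlinarith [key ρ, mul_nonneg h1.le (sq_nonneg (4 * (1 - ρ) - 3 * (2 - α - β))),
        mul_pos (mul_pos h1 hb3a) (by linarith : (0:ℝ) < α - 3 * β + 2)]
  · intro h
    have hQ : 0 < (α + β) ^ 3 - 5 * (α * β) * (α + β) + 6 * (α * β)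
        - 3 * (α + β) + 2 := by
      have hp : 0 < α * β := mul_pos h0 hβ0
      rcases le_or_gt (α + β) (6 / 5) with hs | hs
      · -- 6 - 5s ≥ 0 ; use Q = (s-1)^2 (s+2) + p (6 - 5 s)
        rcases lt_or_ge (α + β) (6 / 5) with hs' | hs'
        · nlinarith [sq_nonneg (α + β - 1), mul_pos hp (by linarith : (0:ℝ) < 6 - 5 * (α + β))]
        · -- s = 6/5 exactly
          have hseq : α + β = 6 / 5 := le_antisymm hs hs'
          nlinarith [sq_nonneg (α + β - 1)]
      · -- 6 - 5s < 0 ; use p ≤ s²/4 and Q ≥ (2-s)³/4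
        have hs2 : α + β < 2 := by linarith
        nlinarith [mul_nonneg (sq_nonneg (α - β)) (by linarith : (0:ℝ) ≤ 5 * (α + β) - 6),
          mul_pos (mul_pos (by linarith : (0:ℝ) < 2 - (α + β))
            (by linarith : (0:ℝ) < 2 - (α + β))) (by linarith : (0:ℝ) < 2 - (α + β))]
    apply div_pos _ (by linarith : (0:ℝ) < β - α)
    have hid : β * v β - α * v α = (β - α) * ((α + β) ^ 3
        - 5 * (α * β) * (α + β) + 6 * (α * β) - 3 * (α + β) + 2) / 6 := by
      rw [hv, hv, hγ]; ring
    rw [hid]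
    have := mul_pos (show (0:ℝ) < β - α by linarith) hQ
    linarith
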